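/- arXiv:1305.2463 — 3 statements merged into one kernel-verified Lean document; each statement's English description precedes it below -/
import Mathlib

section
/- Let P0, P1 : ℝ → ℝ³ be differentiable curves with P1(t) ≠ 0 for every t, and let N(s,t) = P1(t) ×₃ (P0'(t) + s • P1'(t)) denote the normal vector of the ruled surface P(s,t) = P0(t) + s • P1(t). Then N(s,t) ×₃ N(s',t) = 0 for all s, s', t (i.e. the normal direction is constant along every ruling, the developability condition) if and only if, for every t, the determinant of the 3×3 matrix with rows P0'(t), P1(t), P1'(t) vanishes. -/
open Matrix

lemma cross_key (a b c : Fin 3 → ℝ) (s s' : ℝ) :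
    (a ⨯₃ (b + s • c)) ⨯₃ (a ⨯₃ (b + s' • c))
      = ((s - s') * (Matrix.of ![b, a, c]).det) • a := by
  funext i
  fin_cases i <;>
    simp [crossProduct, Matrix.det_fin_three, Pi.add_apply, Pi.smul_apply] <;> ring

/-- Developability criterion (Lemma 2.1).  Let `P0, P1 : ℝ → ℝ³` be differentiable curves
with `P1 t ≠ 0` for every `t`, and let `N s t = P1 t ×₃ (P0' t + s • P1' t)` denote the
normal vector of the ruled surface `P(s,t) = P0 t + s • P1 t`.  Then
`N s t ×₃ N s' t = 0` for all `s, s', t` (the normal direction is constant along every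
ruling) if and only if, for every `t`, the determinant of the `3×3` matrix with rows
`P0' t, P1 t, P1' t` vanishes. -/
theorem ruled_developable_iff_triple_det_eq_zero
    (P0 P1 : ℝ → Fin 3 → ℝ) (hP0 : Differentiable ℝ P0) (hP1 : Differentiable ℝ P1)
    (hP1ne : ∀ t, P1 t ≠ 0)
    (N : ℝ → ℝ → Fin 3 → ℝ)
    (hN : ∀ s t, N s t = P1 t ⨯₃ (deriv P0 t + s • deriv P1 t)) :
    (∀ s s' t, N s t ⨯₃ N s' t = 0) ↔
      ∀ t, (Matrix.of ![deriv P0 t, P1 t, deriv P1 t]).det = 0 := by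
  constructor
  · intro h t
    have := h 1 0 t
    rw [hN, hN, cross_key] at this
    rcases smul_eq_zero.mp this with h' | h'
    · have : ((1 : ℝ) - 0) ≠ 0 := by norm_num
      simpa [this] using mul_eq_zero.mp h'
    · exact absurd h' (hP1ne t)
  · intro h s s' t
    rw [hN, hN, cross_key, h t, mul_zero, zero_smul]
end

section
/- Let P0 ∈ ℝ³, let L : ℝ³ →ₗ[ℝ] ℝ be a linear functional and c ∈ ℝ with L(P0) ≠ c, and let C : ℝ → ℝ³ be an injective curve with L(C(t)) = c for all t (so the curve C lies in a plane not passing through P0). Define Φ(s,t) = (1 − s) • P0 + s • C(t) and let S = {P0 + s • (x − P0) : s ∈ ℝ, x ∈ Set.range C} be the cone with apex P0 over the curve C. Then Φ restricted to {(s,t) ∈ ℝ × ℝ : s ≠ 0} is a bijection onto S \ {P0}; in particular Φ is an injective (proper) parametrization of the conical surface away from the apex. -/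
/-- Sufficiency direction of Lemma 3.2.  Let `P0 ∈ ℝ³`, let `L` be a linear functional and
`c ∈ ℝ` with `L P0 ≠ c`, and let `C : ℝ → ℝ³` be an injective curve with `L (C t) = c` for
all `t` (so `C` lies in a plane not through `P0`).  Define `Φ(s,t) = (1-s) • P0 + s • C t`
and let `S` be the cone with apex `P0` over `C`.  Then `Φ` restricted to `{(s,t) : s ≠ 0}`
is a bijection onto `S \ {P0}`. -/
theorem conical_parametrization_proper
    (P0 : Fin 3 → ℝ) (L : (Fin 3 → ℝ) →ₗ[ℝ] ℝ) (c : ℝ) (hL : L P0 ≠ c)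
    (C : ℝ → Fin 3 → ℝ) (hCinj : Function.Injective C) (hC : ∀ t, L (C t) = c) :
    Set.BijOn (fun p : ℝ × ℝ => (1 - p.1) • P0 + p.1 • C p.2)
      {p : ℝ × ℝ | p.1 ≠ 0}
      ({y | ∃ s : ℝ, ∃ x ∈ Set.range C, y = P0 + s • (x - P0)} \ {P0}) := by
  have key : ∀ (s : ℝ) (t : ℝ), (1 - s) • P0 + s • C t = P0 + s • (C t - P0) := by
    intro s t
    ext i
    simp only [Pi.smul_apply, Pi.add_apply, Pi.sub_apply, smul_eq_mul]
    ring
  have hne : c - L P0 ≠ 0 := sub_ne_zero.mpr (Ne.symm hL)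
  constructor
  · -- maps to
    rintro ⟨s, t⟩ hs
    refine ⟨⟨s, C t, ⟨t, rfl⟩, (key s t)⟩, ?_⟩
    intro h
    simp only [Set.mem_singleton_iff] at h; rw [key s t] at h
    have h0 : s • (C t - P0) = 0 := by
      have := h
      rwa [add_eq_left] at this
    have := congrArg L h0
    rw [map_smul, map_sub, hC, map_zero, smul_eq_mul] at this
    exact hs (by
      rcases mul_eq_zero.mp this with h' | h'
      · exact h'
      · exact absurd h' hne)
  constructor
  · -- injective
    rintro ⟨s1, t1⟩ hs1 ⟨s2, t2⟩ hs2 h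
    simp only [key] at h
    have h' : s1 • (C t1 - P0) = s2 • (C t2 - P0) := by
      rwa [add_right_inj] at h
    have hL' : s1 * (c - L P0) = s2 * (c - L P0) := by
      have := congrArg L h'
      simpa [map_smul, map_sub, hC, smul_eq_mul] using this
    have hs : s1 = s2 := mul_right_cancel₀ hne hL'
    subst hs
    have h2 : C t1 - P0 = C t2 - P0 := smul_right_injective _ hs1 h'
    have h3 : C t1 = C t2 := by
      have := congrArg (· + P0) h2
      simpa using this
    exact Prod.ext rfl (hCinj h3)
  · -- surjective
    rintro y ⟨⟨s, x, ⟨t, rfl⟩, hy⟩, hyP⟩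
    have hsne : s ≠ 0 := by
      rintro rfl
      apply hyP
      simp [hy]
    exact ⟨(s, t), hsne, by simp only [key]; exact hy.symm⟩
end

section
/- Let P0 ∈ ℝ³ and P1 : ℝ → ℝ³, and consider the conical parametrization Φ(s,t) = P0 + s • P1(t). Let L : ℝ³ →ₗ[ℝ] ℝ be a linear functional and c ∈ ℝ with L(P0) ≠ c. Then for every t with L(P1(t)) ≠ 0: (i) setting q(t) = (c − L(P0)) / L(P1(t)), one has L(Φ(q(t), t)) = c, and q(t) is the unique s ∈ ℝ with L(Φ(s,t)) = c; (ii) q(t) ≠ 0; and (iii) if Φ is injective on {(s,t) : s ≠ 0}, then the plane-section curve t ↦ Φ(q(t), t) is injective on {t : L(P1(t)) ≠ 0}. -/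
/-- Necessity direction of Lemma 3.2.  Let `P0 ∈ ℝ³`, `P1 : ℝ → ℝ³`, and consider the
conical parametrization `Φ(s,t) = P0 + s • P1 t`.  Let `L` be a linear functional and
`c ∈ ℝ` with `L P0 ≠ c`.  Then for every `t` with `L (P1 t) ≠ 0`: (i) with
`q t = (c - L P0) / L (P1 t)` one has `L (Φ (q t) t) = c`, and `q t` is the unique such
parameter value; (ii) `q t ≠ 0`; and (iii) if `Φ` is injective on `{(s,t) : s ≠ 0}`, then
the plane-section curve `t ↦ Φ (q t) t` is injective on `{t : L (P1 t) ≠ 0}`. -/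
theorem conical_plane_section_proper
    (P0 : Fin 3 → ℝ) (P1 : ℝ → Fin 3 → ℝ)
    (L : (Fin 3 → ℝ) →ₗ[ℝ] ℝ) (c : ℝ) (hL : L P0 ≠ c) :
    (∀ t : ℝ, L (P1 t) ≠ 0 →
      L (P0 + ((c - L P0) / L (P1 t)) • P1 t) = c ∧
      ∀ s : ℝ, L (P0 + s • P1 t) = c → s = (c - L P0) / L (P1 t)) ∧
    (∀ t : ℝ, L (P1 t) ≠ 0 → (c - L P0) / L (P1 t) ≠ 0) ∧
    (Set.InjOn (fun p : ℝ × ℝ => P0 + p.1 • P1 p.2) {p : ℝ × ℝ | p.1 ≠ 0} →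
      Set.InjOn (fun t : ℝ => P0 + ((c - L P0) / L (P1 t)) • P1 t)
        {t : ℝ | L (P1 t) ≠ 0}) := by
  have hq : ∀ t : ℝ, L (P1 t) ≠ 0 → (c - L P0) / L (P1 t) ≠ 0 := by
    intro t ht
    exact div_ne_zero (sub_ne_zero.mpr (Ne.symm hL)) ht
  refine ⟨?_, hq, ?_⟩
  · intro t ht
    constructor
    · simp [map_add, map_smul, div_mul_cancel₀ _ ht]
    · intro s hs
      rw [map_add, map_smul] at hs
      have : s * L (P1 t) = c - L P0 := by simp [smul_eq_mul] at hs; linarith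
      field_simp [this]
      exact this
  · intro hinj
    intro t1 h1 t2 h2 heq
    have heq' : (fun p : ℝ × ℝ => P0 + p.1 • P1 p.2) (((c - L P0) / L (P1 t1)), t1)
        = (fun p : ℝ × ℝ => P0 + p.1 • P1 p.2) (((c - L P0) / L (P1 t2)), t2) := heq
    exact congrArg Prod.snd (hinj (hq t1 h1) (hq t2 h2) heq')
end
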